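/- Let V ∈ ℂ^{M×n} with linearly independent columns and let P be the selection matrix produced by the DEIM algorithm applied to the columns of V (choosing at each step the index of maximal absolute value of the residual). Then at each step i the residual rᵢ = eᵢ − U c is nonzero, hence its maximal entry rᵢ(pᵢ) ≠ 0, and consequently P^T V is invertible. -/

import Mathlib

open Matrix

/-- In the DEIM greedy point selection applied to linearly independent columns,
each residual is nonzero, its maximal entry `rᵢ(pᵢ)` is nonzero, and consequently
`PᵀV` is invertible. -/
theorem stmt_16 {M n : ℕ} (hn : 0 < n) (hnM : n ≤ M)
    (e r : Fin n → Fin M → ℂ)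
    (he : LinearIndependent ℂ e)
    (σ : Fin n → Fin M)
    (c : Fin n → Fin n → ℂ)
    -- the residual at step `i` is `eᵢ` minus a combination of the previous
    -- residuals (equivalently, of `e₁,…,e_{i−1}`) ...
    (hres : ∀ i : Fin n, r i = e i - ∑ j ∈ Finset.univ.filter (· < i), c i j • r j)
    -- ... chosen so that the residual interpolates at the previously selected
    -- indices, i.e. vanishes there:
    (hvanish : ∀ i j : Fin n, j < i → r i (σ j) = 0)
    -- the index `σ i` maximizes the absolute value of the residual:
    (hmax : ∀ i : Fin n, ∀ k : Fin M, ‖r i k‖ ≤ ‖r i (σ i)‖) :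
    let V : Matrix (Fin M) (Fin n) ℂ := Matrix.of fun k j => e j k
    let P : Matrix (Fin M) (Fin n) ℂ := Matrix.of fun k j => if k = σ j then 1 else 0
    (∀ i : Fin n, r i ≠ 0)
      ∧ (∀ i : Fin n, r i (σ i) ≠ 0)
      ∧ IsUnit (Pᵀ * V) := by
  intro V P
  -- r i - e i lies in the span of earlier e's
  have key : ∀ m : ℕ, ∀ i : Fin n, (i : ℕ) < m →
      r i - e i ∈ Submodule.span ℂ (e '' {j | j < i}) := by
    intro m
    induction m with
    | zero => intro i hi; omega
    | succ m ih =>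
      intro i hi
      have : r i - e i = -(∑ j ∈ Finset.univ.filter (· < i), c i j • r j) := by
        rw [hres i]; abel
      rw [this]
      apply neg_mem
      apply Submodule.sum_mem
      intro j hj
      rw [Finset.mem_filter] at hj
      have hji : j < i := hj.2
      apply Submodule.smul_mem
      have h1 : e j ∈ Submodule.span ℂ (e '' {l | l < i}) :=
        Submodule.subset_span ⟨j, hji, rfl⟩
      have h2 : r j - e j ∈ Submodule.span ℂ (e '' {l | l < i}) := by
        refine Submodule.span_mono (Set.image_mono ?_) (ih j (by omega))
        intro l hl; exact lt_trans hl hji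
      have := Submodule.add_mem _ h2 h1
      simpa using this
  have hrne : ∀ i : Fin n, r i ≠ 0 := by
    intro i h0
    have hmem := key n i i.isLt
    rw [h0] at hmem
    have : e i ∈ Submodule.span ℂ (e '' {j | j < i}) := by
      have := Submodule.neg_mem _ hmem
      simpa using this
    exact he.notMem_span_image (by simp) this
  have hσne : ∀ i : Fin n, r i (σ i) ≠ 0 := by
    intro i h0
    apply hrne i
    funext k
    have := hmax i k
    rw [h0] at this
    simp only [norm_zero] at this
    simpa using norm_le_zero_iff.mp this
  refine ⟨hrne, hσne, ?_⟩
  -- Pᵀ * V = B * C with B lower triangular, C upper unitriangular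
  set B : Matrix (Fin n) (Fin n) ℂ := Matrix.of fun i j => r j (σ i) with hB
  set C : Matrix (Fin n) (Fin n) ℂ :=
    Matrix.of fun l j => if l = j then 1 else if l < j then c j l else 0 with hC
  have hPV : Pᵀ * V = B * C := by
    ext i j
    have hlhs : (Pᵀ * V) i j = e j (σ i) := by
      simp [Matrix.mul_apply, P, V, transpose_apply]
    rw [hlhs]
    have hrhs : (B * C) i j
        = r j (σ i) + ∑ l ∈ Finset.univ.filter (· < j), c j l * r l (σ i) := by
      rw [Matrix.mul_apply]
      rw [Finset.sum_eq_add_sum_sdiff_singleton_of_mem (Finset.mem_univ j)]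
      congr 1
      · simp [B, C]
      · rw [Finset.sum_filter]
        rw [show (Finset.univ \ {j} : Finset (Fin n)) = Finset.univ.filter (· ≠ j) by
          ext x; simp]
        rw [Finset.sum_filter]
        apply Finset.sum_congr rfl
        intro l _
        by_cases hlj : l = j
        · simp [hlj]
        · by_cases hlt : l < j
          · simp [B, C, hlj, hlt, mul_comm]
          · simp [B, C, hlj, hlt]
    rw [hrhs]
    have := congrFun (hres j) (σ i)
    simp only [Pi.sub_apply, Finset.sum_apply, Pi.smul_apply, smul_eq_mul] at this
    rw [this]; ring
  rw [hPV]
  have hBunit : IsUnit B := by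
    rw [Matrix.isUnit_iff_isUnit_det, isUnit_iff_ne_zero,
      Matrix.det_of_lowerTriangular B (by
        intro i j hij
        exact hvanish j i hij)]
    exact Finset.prod_ne_zero_iff.mpr fun i _ => hσne i
  have hCunit : IsUnit C := by
    rw [Matrix.isUnit_iff_isUnit_det, isUnit_iff_ne_zero,
      Matrix.det_of_upperTriangular (M := C) (by
        intro i j hij
        simp only [id_eq] at hij
        simp [C, hij.ne', asymm hij])]
    simp [C]
  exact hBunit.mul hCunit
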